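/- Fix a drift parameter μ > 0 and define from reals X₁,…,X_t the CUSUM quantities V_{t,k} = (S_t − S_k − (μ/2)(t−k))·μ, where S_k = X₁+…+X_k (S₀ = 0). (i) Deterministically, for any integers 0 ≤ m ≤ t: max_{0≤k≤m} V_{m,k} − max_{0≤k≤t} V_{t,k} ≤ −V_{t,m}. (ii) If in addition X_{m+1},…,X_t are i.i.d. N(μ, σ²) with σ > 0 (independent of the, possibly arbitrary, random variables X₁,…,X_m), then P( max_{0≤k≤m} V_{m,k} > max_{0≤k≤t} V_{t,k} ) ≤ P(V_{t,m} < 0) = Φ(−μ√(t−m)/(2σ)), where Φ is the standard normal cumulative distribution function. -/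

import Mathlib

open MeasureTheory ProbabilityTheory Filter Real

noncomputable section

/-- Standard normal CDF Φ. -/
def stdCDF (x : ℝ) : ℝ := ((gaussianReal 0 1) (Set.Iic x)).toReal

/-- Partial sums of a path: `pS X 0 = 0`, `pS X t = X 1 + ⋯ + X t`. -/
def pS (X : ℕ → ℝ) (t : ℕ) : ℝ := ∑ i ∈ Finset.Icc 1 t, X i

/-- CUSUM quantity `V_{t,k}` with drift parameter μ. -/
def cusumV (μ : ℝ) (X : ℕ → ℝ) (t k : ℕ) : ℝ :=
  (pS X t - pS X k - μ / 2 * ((t : ℝ) - (k : ℝ))) * μ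

open scoped NNReal ENNReal

private lemma pdf_conv_pointwise (m₁ m₂ : ℝ) {v₁ v₂ : ℝ≥0} (h₁ : v₁ ≠ 0) (h₂ : v₂ ≠ 0) (z y : ℝ) :
    gaussianPDFReal m₁ v₁ (z - y) * gaussianPDFReal m₂ v₂ y
      = gaussianPDFReal (m₁ + m₂) (v₁ + v₂) z *
        ((Real.sqrt (π / (((v₁:ℝ) + ↑v₂) / (2 * ↑v₁ * ↑v₂))))⁻¹ *
          Real.exp (-(((v₁:ℝ) + ↑v₂) / (2 * (v₁:ℝ) * ↑v₂)) *
            (y - ((↑v₂ * (z - m₁) + ↑v₁ * m₂) / ((v₁:ℝ) + ↑v₂)))^2)) := by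
  have hw₁ : (0:ℝ) < v₁ := NNReal.coe_pos.mpr (pos_iff_ne_zero.mpr h₁)
  have hw₂ : (0:ℝ) < v₂ := NNReal.coe_pos.mpr (pos_iff_ne_zero.mpr h₂)
  have hw : (0:ℝ) < (v₁:ℝ) + v₂ := by linarith
  have hπ : (0:ℝ) < π := pi_pos
  unfold gaussianPDFReal
  push_cast [NNReal.coe_add]
  have hsqrt : (√(2 * π * ↑v₁))⁻¹ * (√(2 * π * ↑v₂))⁻¹
      = (√(2 * π * ((v₁:ℝ) + ↑v₂)))⁻¹ * (√(π / (((v₁:ℝ) + ↑v₂) / (2 * ↑v₁ * ↑v₂))))⁻¹ := by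
    rw [← mul_inv, ← mul_inv, ← Real.sqrt_mul (by positivity), ← Real.sqrt_mul (by positivity)]
    congr 1
    field_simp
  have hexp : -(z - y - m₁) ^ 2 / (2 * ↑v₁) + -(y - m₂) ^ 2 / (2 * ↑v₂)
      = -(z - (m₁ + m₂)) ^ 2 / (2 * ((v₁:ℝ) + ↑v₂)) +
        -(((v₁:ℝ) + ↑v₂) / (2 * (v₁:ℝ) * ↑v₂)) *
            (y - ((↑v₂ * (z - m₁) + ↑v₁ * m₂) / ((v₁:ℝ) + ↑v₂)))^2 := by
    field_simp
    ring
  calc (√(2 * π * ↑v₁))⁻¹ * rexp (-(z - y - m₁) ^ 2 / (2 * ↑v₁)) *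
        ((√(2 * π * ↑v₂))⁻¹ * rexp (-(y - m₂) ^ 2 / (2 * ↑v₂)))
      = ((√(2 * π * ↑v₁))⁻¹ * (√(2 * π * ↑v₂))⁻¹) *
        rexp (-(z - y - m₁) ^ 2 / (2 * ↑v₁) + -(y - m₂) ^ 2 / (2 * ↑v₂)) := by
        rw [Real.exp_add]; ring
    _ = _ := by rw [hsqrt, hexp, Real.exp_add]; ring

private lemma pdf_conv_integrable (m₁ m₂ : ℝ) {v₁ v₂ : ℝ≥0} (h₁ : v₁ ≠ 0) (h₂ : v₂ ≠ 0) (z : ℝ) :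
    Integrable (fun y => gaussianPDFReal m₁ v₁ (z - y) * gaussianPDFReal m₂ v₂ y) := by
  have hw₁ : (0:ℝ) < v₁ := NNReal.coe_pos.mpr (pos_iff_ne_zero.mpr h₁)
  have hw₂ : (0:ℝ) < v₂ := NNReal.coe_pos.mpr (pos_iff_ne_zero.mpr h₂)
  have hA : (0:ℝ) < ((v₁:ℝ) + ↑v₂) / (2 * (v₁:ℝ) * ↑v₂) := by positivity
  simp_rw [pdf_conv_pointwise m₁ m₂ h₁ h₂ z, ← mul_assoc]
  exact (((integrable_exp_neg_mul_sq hA).comp_sub_right _).const_mul _)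

private lemma pdf_conv_integral (m₁ m₂ : ℝ) {v₁ v₂ : ℝ≥0} (h₁ : v₁ ≠ 0) (h₂ : v₂ ≠ 0) (z : ℝ) :
    ∫ y, gaussianPDFReal m₁ v₁ (z - y) * gaussianPDFReal m₂ v₂ y
      = gaussianPDFReal (m₁ + m₂) (v₁ + v₂) z := by
  have hw₁ : (0:ℝ) < v₁ := NNReal.coe_pos.mpr (pos_iff_ne_zero.mpr h₁)
  have hw₂ : (0:ℝ) < v₂ := NNReal.coe_pos.mpr (pos_iff_ne_zero.mpr h₂)
  have hA : (0:ℝ) < ((v₁:ℝ) + ↑v₂) / (2 * (v₁:ℝ) * ↑v₂) := by positivity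
  have hs : Real.sqrt (π / (((v₁:ℝ) + ↑v₂) / (2 * ↑v₁ * ↑v₂))) ≠ 0 :=
    ne_of_gt (Real.sqrt_pos.mpr (by positivity))
  simp_rw [pdf_conv_pointwise m₁ m₂ h₁ h₂ z]
  rw [MeasureTheory.integral_const_mul, MeasureTheory.integral_const_mul]
  have : ∫ y, rexp (-(((v₁:ℝ) + ↑v₂) / (2 * (v₁:ℝ) * ↑v₂)) *
      (y - ((↑v₂ * (z - m₁) + ↑v₁ * m₂) / ((v₁:ℝ) + ↑v₂)))^2)
      = Real.sqrt (π / (((v₁:ℝ) + ↑v₂) / (2 * ↑v₁ * ↑v₂))) := by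
    rw [integral_sub_right_eq_self (fun y => rexp (-(((v₁:ℝ) + ↑v₂) / (2 * (v₁:ℝ) * ↑v₂)) * y^2))
      ((↑v₂ * (z - m₁) + ↑v₁ * m₂) / ((v₁:ℝ) + ↑v₂))]
    exact integral_gaussian _
  rw [this, inv_mul_cancel₀ hs, mul_one]

private lemma gaussianPDF_conv (m₁ m₂ : ℝ) {v₁ v₂ : ℝ≥0} (h₁ : v₁ ≠ 0) (h₂ : v₂ ≠ 0) (z : ℝ) :
    ∫⁻ y, gaussianPDF m₁ v₁ (z - y) * gaussianPDF m₂ v₂ y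
      = gaussianPDF (m₁ + m₂) (v₁ + v₂) z := by
  unfold gaussianPDF
  simp_rw [← ENNReal.ofReal_mul (gaussianPDFReal_nonneg m₁ v₁ _)]
  rw [← ofReal_integral_eq_lintegral_ofReal (pdf_conv_integrable m₁ m₂ h₁ h₂ z)
    (Filter.Eventually.of_forall fun y =>
      mul_nonneg (gaussianPDFReal_nonneg _ _ _) (gaussianPDFReal_nonneg _ _ _)),
    pdf_conv_integral m₁ m₂ h₁ h₂ z]

private lemma gaussianReal_conv (m₁ m₂ : ℝ) {v₁ v₂ : ℝ≥0} (h₁ : v₁ ≠ 0) (h₂ : v₂ ≠ 0) :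
    Measure.map (fun p : ℝ × ℝ => p.1 + p.2) ((gaussianReal m₁ v₁).prod (gaussianReal m₂ v₂))
      = gaussianReal (m₁ + m₂) (v₁ + v₂) := by
  have h12 : v₁ + v₂ ≠ 0 := by simp [h₁]
  ext s hs
  rw [Measure.map_apply measurable_add hs,
    Measure.prod_apply (measurable_add hs),
    gaussianReal_of_var_ne_zero _ h₂, gaussianReal_of_var_ne_zero _ h₁,
    gaussianReal_of_var_ne_zero _ h12, withDensity_apply _ hs]
  have hm₁ := measurable_gaussianPDF m₁ v₁
  have hm₂ := measurable_gaussianPDF m₂ v₂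
  have hI : Measurable (s.indicator (1 : ℝ → ℝ≥0∞)) := measurable_one.indicator hs
  have step1 : ∀ x, (volume.withDensity (gaussianPDF m₂ v₂)) (Prod.mk x ⁻¹' ((fun p : ℝ × ℝ => p.1 + p.2) ⁻¹' s))
      = ∫⁻ y, s.indicator 1 (x + y) * gaussianPDF m₂ v₂ y := by
    intro x
    have hsx : MeasurableSet {y : ℝ | x + y ∈ s} := (measurable_const_add x) hs
    have hpre : Prod.mk x ⁻¹' ((fun p : ℝ × ℝ => p.1 + p.2) ⁻¹' s) = {y | x + y ∈ s} := rfl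
    rw [hpre, withDensity_apply _ hsx, ← lintegral_indicator hsx]
    congr 1
    ext y
    by_cases hy : x + y ∈ s <;>
      simp [Set.indicator_apply, hy]
  simp_rw [step1]
  rw [lintegral_withDensity_eq_lintegral_mul _ hm₁
    (Measurable.lintegral_prod_right
      (by exact (hI.comp measurable_add).mul (hm₂.comp measurable_snd)))]
  simp only [Pi.mul_apply]
  have step2 : ∀ x, gaussianPDF m₁ v₁ x * ∫⁻ y, s.indicator 1 (x + y) * gaussianPDF m₂ v₂ y
      = ∫⁻ y, s.indicator 1 (x + y) * (gaussianPDF m₁ v₁ x * gaussianPDF m₂ v₂ y) := by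
    intro x
    rw [← lintegral_const_mul _ (by fun_prop)]
    congr 1; ext y; ring
  simp_rw [step2]
  rw [lintegral_lintegral_swap
    (by exact ((hI.comp measurable_add).mul
      ((hm₁.comp measurable_fst).mul (hm₂.comp measurable_snd))).aemeasurable)]
  have step3 : ∀ y, (∫⁻ x, s.indicator 1 (x + y) * (gaussianPDF m₁ v₁ x * gaussianPDF m₂ v₂ y))
      = ∫⁻ z, s.indicator 1 z * (gaussianPDF m₁ v₁ (z - y) * gaussianPDF m₂ v₂ y) := by
    intro y
    rw [← (measurePreserving_add_right volume y).lintegral_comp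
      (f := fun z => s.indicator 1 z * (gaussianPDF m₁ v₁ (z - y) * gaussianPDF m₂ v₂ y))
      (hI.mul ((hm₁.comp (measurable_id.sub_const y)).mul measurable_const))]
    simp
  simp_rw [step3]
  rw [lintegral_lintegral_swap
    (by exact ((hI.comp measurable_snd).mul
      ((hm₁.comp (measurable_snd.sub measurable_fst)).mul (hm₂.comp measurable_fst))).aemeasurable)]
  have step4 : ∀ z, (∫⁻ y, s.indicator 1 z * (gaussianPDF m₁ v₁ (z - y) * gaussianPDF m₂ v₂ y))
      = s.indicator (gaussianPDF (m₁ + m₂) (v₁ + v₂)) z := by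
    intro z
    rw [lintegral_const_mul _ (by fun_prop), gaussianPDF_conv m₁ m₂ h₁ h₂]
    by_cases hz : z ∈ s <;> simp [Set.indicator_apply, hz]
  simp_rw [step4]
  rw [lintegral_indicator hs]

lemma cusum_split (μ : ℝ) (X : ℕ → ℝ) (t m k : ℕ) :
    cusumV μ X t k = cusumV μ X t m + cusumV μ X m k := by
  unfold cusumV; ring

lemma part_one (μ : ℝ) (X : ℕ → ℝ) (m t : ℕ) (hmt : m ≤ t) :
    (⨆ k : Fin (m + 1), cusumV μ X m (k : ℕ)) - (⨆ k : Fin (t + 1), cusumV μ X t (k : ℕ)) ≤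
      -cusumV μ X t m := by
  have hbdd : BddAbove (Set.range fun k : Fin (t + 1) => cusumV μ X t (k : ℕ)) :=
    (Set.finite_range _).bddAbove
  rw [sub_le_iff_le_add]
  apply ciSup_le
  intro k
  have hk : (k : ℕ) ≤ m := Nat.lt_succ_iff.mp k.isLt
  have h1 := le_ciSup hbdd (⟨(k : ℕ), by omega⟩ : Fin (t + 1))
  have h2 := cusum_split μ X t m (k : ℕ)
  simp only at h1
  linarith
lemma indepFun_map_add_gauss {Ω : Type*} [MeasurableSpace Ω] {P : Measure Ω}
    [IsProbabilityMeasure P] {f g : Ω → ℝ} (hf : Measurable f) (hg : Measurable g)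
    (h : IndepFun f g P) {a b : ℝ} {u w : ℝ≥0} (hu : u ≠ 0) (hw : w ≠ 0)
    (hmf : Measure.map f P = gaussianReal a u) (hmg : Measure.map g P = gaussianReal b w) :
    Measure.map (f + g) P = gaussianReal (a + b) (u + w) := by
  have h1 := (indepFun_iff_map_prod_eq_prod_map_map hf.aemeasurable hg.aemeasurable).mp h
  have h2 : Measure.map (f + g) P
      = Measure.map (fun p : ℝ × ℝ => p.1 + p.2) (Measure.map (fun ω => (f ω, g ω)) P) := by
    rw [Measure.map_map measurable_add (hf.prodMk hg)]; rfl
  rw [h2, h1, hmf, hmg, gaussianReal_conv _ _ hu hw]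

lemma map_sum_gauss {Ω : Type*} [MeasurableSpace Ω] {P : Measure Ω} [IsProbabilityMeasure P]
    {ι : Type*} {X : ι → Ω → ℝ} (hX : ∀ i, Measurable (X i))
    (h : iIndepFun X P) {μ₀ : ℝ} {v : ℝ≥0} (hv : v ≠ 0)
    (hg : ∀ i, Measure.map (X i) P = gaussianReal μ₀ v) (s : Finset ι) (hs : s.Nonempty) :
    Measure.map (∑ i ∈ s, X i) P = gaussianReal (s.card * μ₀) (s.card * v) := by
  induction hs using Finset.Nonempty.cons_induction with
  | singleton a => simpa using hg a
  | cons a s has hne ih =>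
    rw [Finset.sum_cons]
    have hcard : s.card ≠ 0 := Finset.card_ne_zero_of_mem (hne.choose_spec)
    have hv' : (s.card : ℝ≥0) * v ≠ 0 := by
      simp [hv, hcard]
    have hindep : IndepFun (X a) (∑ j ∈ s, X j) P :=
      (h.indepFun_finsetSum_of_notMem hX has).symm
    have := indepFun_map_add_gauss (hX a)
      (show Measurable (∑ j ∈ s, X j) by
        rw [Finset.sum_fn]; exact s.measurable_sum (fun i _ => hX i))
      hindep hv hv' (hg a) ih
    rw [this]
    congr 1
    · rw [Finset.card_cons]; push_cast; ring
    · rw [Finset.card_cons]; push_cast; ring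

lemma pS_diff (Y : ℕ → ℝ) (m t : ℕ) (hmt : m ≤ t) :
    pS Y t - pS Y m = ∑ i ∈ Finset.Ioc m t, Y i := by
  unfold pS
  have h1 : ∀ u : ℕ, Finset.Icc 1 u = Finset.Ioc 0 u := by
    intro u; ext x; simp; omega
  rw [h1, h1, ← Finset.sum_Ioc_consecutive _ (Nat.zero_le m) hmt]
  ring

lemma gaussianReal_Iio_eq_Iic (M : ℝ) {V : ℝ≥0} (hV : V ≠ 0) (c : ℝ) :
    gaussianReal M V (Set.Iio c) = gaussianReal M V (Set.Iic c) := by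
  have : NullSingletonClass (gaussianReal M V) :=
    ⟨fun x => (gaussianReal_absolutelyContinuous M hV) (measure_singleton x)⟩
  exact measure_congr Iio_ae_eq_Iic

lemma gaussianReal_Iic_eq (M : ℝ) {V : ℝ≥0} (hV : V ≠ 0) (c : ℝ) :
    gaussianReal M V (Set.Iic c)
      = gaussianReal 0 1 (Set.Iic ((c - M) / Real.sqrt (V : ℝ))) := by
  have hV' : (0:ℝ) < V := NNReal.coe_pos.mpr (pos_iff_ne_zero.mpr hV)
  have hs : 0 < Real.sqrt (V : ℝ) := Real.sqrt_pos.mpr hV'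
  have hmap : Measure.map (fun x : ℝ => Real.sqrt (V : ℝ) * x + M) (gaussianReal 0 1)
      = gaussianReal M V := by
    rw [show (fun x : ℝ => Real.sqrt (V : ℝ) * x + M)
        = (· + M) ∘ (fun x : ℝ => Real.sqrt (V : ℝ) * x) from rfl,
      ← Measure.map_map (measurable_add_const M) (measurable_const_mul _),
      gaussianReal_map_const_mul, gaussianReal_map_add_const]
    congr 1
    · simp
    · rw [mul_one]
      exact Subtype.ext (by simpa using Real.sq_sqrt hV'.le)
  rw [← hmap, Measure.map_apply (by fun_prop) measurableSet_Iic]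
  congr 1
  ext x
  simp only [Set.mem_preimage, Set.mem_Iic]
  rw [le_div_iff₀ hs]
  constructor <;> intro h <;> nlinarith

/-- (i) deterministically, for 0 ≤ m ≤ t,
max_{0≤k≤m} V_{m,k} − max_{0≤k≤t} V_{t,k} ≤ −V_{t,m}; (ii) if X_{m+1},…,X_t are
i.i.d. N(μ,σ²), independent of the (possibly arbitrary) random variables X₁,…,X_m, then
P(max_{0≤k≤m} V_{m,k} > max_{0≤k≤t} V_{t,k}) ≤ P(V_{t,m} < 0) = Φ(−μ√(t−m)/(2σ)). -/
theorem statement19 (μ σ : ℝ) (hμ : 0 < μ) (hσ : 0 < σ) :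
    (∀ (X : ℕ → ℝ) (m t : ℕ), m ≤ t →
      (⨆ k : Fin (m + 1), cusumV μ X m (k : ℕ)) - (⨆ k : Fin (t + 1), cusumV μ X t (k : ℕ)) ≤
        -cusumV μ X t m)
    ∧ (∀ (m t : ℕ), m < t →
        ∀ (Ω : Type) [MeasurableSpace Ω] (P : Measure Ω) [IsProbabilityMeasure P]
          (X : ℕ → Ω → ℝ), (∀ i, Measurable (X i)) →
        iIndepFun (fun i : ↥(Set.Ioc m t) => X (i : ℕ)) P →
        IndepFun (fun ω (i : Fin m) => X ((i : ℕ) + 1) ω)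
          (fun ω (i : ↥(Set.Ioc m t)) => X (i : ℕ) ω) P →
        (∀ i, m < i → i ≤ t → Measure.map (X i) P = gaussianReal μ ((σ ^ 2).toNNReal)) →
        (P {ω | (⨆ k : Fin (t + 1), cusumV μ (fun i => X i ω) t (k : ℕ)) <
            ⨆ k : Fin (m + 1), cusumV μ (fun i => X i ω) m (k : ℕ)}).toReal ≤
          (P {ω | cusumV μ (fun i => X i ω) t m < 0}).toReal
        ∧ (P {ω | cusumV μ (fun i => X i ω) t m < 0}).toReal =
            stdCDF (-(μ * Real.sqrt ((t : ℝ) - (m : ℝ))) / (2 * σ))) := by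
  refine ⟨fun X m t hmt => part_one μ X m t hmt, ?_⟩
  intro m t hmt Ω _ P _ X hmeas hiind hind hgauss
  set n : ℕ := t - m with hn
  have hnr : ((n : ℝ)) = (t : ℝ) - m := by
    rw [hn, Nat.cast_sub hmt.le]
  have hnpos : (0:ℝ) < n := by
    have : 0 < n := by omega
    exact_mod_cast this
  set v : ℝ≥0 := (σ ^ 2).toNNReal with hvdef
  have hv : v ≠ 0 := by
    simp only [hvdef, ne_eq, Real.toNNReal_eq_zero, not_le]
    positivity
  set S : Ω → ℝ := fun ω => ∑ i ∈ Finset.Ioc m t, X i ω with hSdef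
  have hS : Measurable S := by
    apply Finset.measurable_sum
    exact fun i _ => hmeas i
  -- distribution of S
  haveI : Nonempty ↥(Set.Ioc m t) := ⟨⟨t, by simp [Set.mem_Ioc]; omega⟩⟩
  have hcard : (Finset.univ : Finset ↥(Set.Ioc m t)).card = n := by
    rw [Finset.card_univ, ← Set.toFinset_card, Set.toFinset_Ioc, Nat.card_Ioc]
  have hmapS : Measure.map S P = gaussianReal ((n : ℝ) * μ) ((n : ℝ≥0) * v) := by
    have h := map_sum_gauss (X := fun i : ↥(Set.Ioc m t) => X (i : ℕ))
      (fun i => hmeas _) hiind hv (fun i => hgauss _ i.2.1 i.2.2)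
      Finset.univ Finset.univ_nonempty
    rw [hcard] at h
    have hfun : (∑ i : ↥(Set.Ioc m t), X (i : ℕ)) = S := by
      funext ω
      rw [Finset.sum_apply]
      rw [show (∑ i : ↥(Set.Ioc m t), X (i : ℕ) ω) = ∑ i ∈ (Set.Ioc m t).toFinset, X i ω
        from Finset.sum_set_coe (f := fun i => X i ω) (Set.Ioc m t), Set.toFinset_Ioc]
    rwa [hfun] at h
  -- event rewriting
  have hEvent : {ω | cusumV μ (fun i => X i ω) t m < 0}
      = S ⁻¹' Set.Iio (μ / 2 * ((t : ℝ) - m)) := by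
    ext ω
    simp only [Set.mem_setOf_eq, Set.mem_preimage, Set.mem_Iio]
    unfold cusumV
    have hdiff := pS_diff (fun i => X i ω) m t hmt.le
    constructor
    · intro h
      nlinarith
    · intro h
      nlinarith
  -- value of the probability
  have hval : P {ω | cusumV μ (fun i => X i ω) t m < 0}
      = gaussianReal 0 1 (Set.Iic (-(μ * Real.sqrt ((t : ℝ) - m)) / (2 * σ))) := by
    rw [hEvent, ← Measure.map_apply hS measurableSet_Iio, hmapS]
    have hV : (n : ℝ≥0) * v ≠ 0 := by
      simp [hv]; omega
    rw [gaussianReal_Iio_eq_Iic _ hV, gaussianReal_Iic_eq _ hV]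
    congr 1
    have hVr : (((n : ℝ≥0) * v : ℝ≥0) : ℝ) = (n : ℝ) * σ ^ 2 := by
      push_cast [hvdef, Real.coe_toNNReal _ (sq_nonneg σ)]
      ring
    rw [hVr, Real.sqrt_mul hnpos.le, Real.sqrt_sq hσ.le]
    have hsn : 0 < Real.sqrt (n : ℝ) := Real.sqrt_pos.mpr hnpos
    have hsq : Real.sqrt (n : ℝ) * Real.sqrt (n : ℝ) = (n : ℝ) :=
      Real.mul_self_sqrt hnpos.le
    rw [← hnr]
    have harg : (μ / 2 * (n:ℝ) - (n:ℝ) * μ) / (Real.sqrt (n:ℝ) * σ)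
        = -(μ * Real.sqrt (n:ℝ)) / (2 * σ) := by
      rw [div_eq_div_iff (by positivity) (by positivity)]
      linear_combination (μ * σ) * hsq
    rw [harg]
  constructor
  · -- inequality via part one
    have hsub : {ω | (⨆ k : Fin (t + 1), cusumV μ (fun i => X i ω) t (k : ℕ)) <
        ⨆ k : Fin (m + 1), cusumV μ (fun i => X i ω) m (k : ℕ)}
        ⊆ {ω | cusumV μ (fun i => X i ω) t m < 0} := by
      intro ω hω
      simp only [Set.mem_setOf_eq] at *
      have := part_one μ (fun i => X i ω) m t hmt.le
      linarith
    exact ENNReal.toReal_mono (measure_ne_top P _) (measure_mono hsub)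
  · rw [hval]; rfl

end
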